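/- The construction assigning to a BM graph (V, F, ∂, j) the JK graph (A = F + T, H = F, V) with involution i given by j on non-fixed flags and interchanging each fixed flag with its copy in T, and the construction assigning to a JK graph without isolated edges the BM graph with F := H and j(f) = s^{-1}(i(s(f))) when i(s(f)) lies in the image of s, and j(f) = f otherwise, are mutually inverse bijections (up to canonical isomorphism) between BM graphs and JK graphs without isolated edges. -/

import Mathlib

/-- A Borisov–Manin graph: a quadruple `(V, F, ∂, j)` of finite sets with
`∂ : F → V` and `j : F → F` an involution.  Fixpoints of `j` are *tails*;
2-element orbits of `j` are *edges*. -/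
structure BMGraph where
  V : Type
  F : Type
  fintV : Fintype V
  fintF : Fintype F
  decF : DecidableEq F
  bd : F → V
  j : F → F
  j_invol : ∀ f, j (j f) = f

attribute [instance] BMGraph.fintV BMGraph.fintF BMGraph.decF

/-- A Borisov–Manin morphism `τ → σ`: a triple `(h^F, h_V, j_h)` satisfying the
Borisov–Manin axioms.  The involution `j_h` is recorded as a total map on `F_τ`,
normalised to be the identity on the image of the flag map, and a fixpoint-free
involution on the complement, agreeing with `j_τ` on edges. -/
structure BMHom (τ σ : BMGraph) where
  flagMap : σ.F → τ.F
  vertexMap : τ.V → σ.V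
  jh : τ.F → τ.F
  flag_inj : Function.Injective flagMap
  vertex_surj : Function.Surjective vertexMap
  range_j_closed : ∀ f : σ.F, τ.j (flagMap f) ∈ Set.range flagMap
  compl_j_closed : ∀ g : τ.F, g ∉ Set.range flagMap → τ.j g ∉ Set.range flagMap
  jh_range : ∀ g ∈ Set.range flagMap, jh g = g
  jh_compl : ∀ g, g ∉ Set.range flagMap → jh g ∉ Set.range flagMap
  jh_invol : ∀ g, jh (jh g) = g
  jh_nofix : ∀ g, g ∉ Set.range flagMap → jh g ≠ g
  jh_edge : ∀ g, g ∉ Set.range flagMap → τ.j g ≠ g → jh g = τ.j g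
  bd_comm : ∀ f : σ.F, vertexMap (τ.bd (flagMap f)) = σ.bd f
  contract_bd : ∀ g, g ∉ Set.range flagMap → vertexMap (τ.bd (jh g)) = vertexMap (τ.bd g)
  edges_to_edges : ∀ f f' : σ.F, τ.j (flagMap f) = flagMap f' → flagMap f ≠ flagMap f' → σ.j f = f'

/-- A grafting: both the vertex map and the flag map are bijective. -/
def IsGrafting {τ σ : BMGraph} (h : BMHom τ σ) : Prop :=
  Function.Bijective h.flagMap ∧ Function.Bijective h.vertexMap

/-- A compression: the flag map restricts to a bijection from the tails of the
codomain graph onto the tails of the domain graph. -/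
def IsCompression {τ σ : BMGraph} (h : BMHom τ σ) : Prop :=
  (∀ f : σ.F, σ.j f = f → τ.j (h.flagMap f) = h.flagMap f) ∧
  (∀ g : τ.F, τ.j g = g → ∃ f : σ.F, σ.j f = f ∧ h.flagMap f = g)

/-- A Joyal–Kock graph: a diagram of finite sets `A ←s– H –p→ V` with `s`
injective and a fixpoint-free involution `i` on the set of arcs `A`. -/
structure JKGraph where
  A : Type
  H : Type
  V : Type
  fintA : Fintype A
  fintH : Fintype H
  fintV : Fintype V
  decA : DecidableEq A
  decH : DecidableEq H
  s : H → A
  p : H → V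
  i : A → A
  s_inj : Function.Injective s
  i_invol : ∀ a, i (i a) = a
  i_nofix : ∀ a, i a ≠ a

attribute [instance] JKGraph.fintA JKGraph.fintH JKGraph.fintV JKGraph.decA JKGraph.decH

/-- An etale morphism of JK graphs: a levelwise map commuting with `s`, `p`
and the involutions, such that the square on `H` and `V` is a pullback (each
vertex maps to a vertex of the same valence). -/
structure Etale (G G' : JKGraph) where
  fA : G.A → G'.A
  fH : G.H → G'.H
  fV : G.V → G'.V
  comm_s : ∀ h, fA (G.s h) = G'.s (fH h)
  comm_p : ∀ h, fV (G.p h) = G'.p (fH h)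
  comm_i : ∀ a, fA (G.i a) = G'.i (fA a)
  pullback : ∀ (h' : G'.H) (v : G.V), G'.p h' = fV v → ∃! h : G.H, G.p h = v ∧ fH h = h'

/-- `IsEComp e1 e2 e` expresses that `e` is the (levelwise) composite of the
etale morphisms `e1` followed by `e2`. -/
def IsEComp {G G' G'' : JKGraph} (e1 : Etale G G') (e2 : Etale G' G'') (e : Etale G G'') : Prop :=
  (∀ a, e.fA a = e2.fA (e1.fA a)) ∧ (∀ h, e.fH h = e2.fH (e1.fH h)) ∧
  (∀ v, e.fV v = e2.fV (e1.fV v))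

/-- The ports of a graph: the arcs not in the image of `s`. -/
def JKGraph.ports (G : JKGraph) : Set G.A := {a | a ∉ Set.range G.s}

/-- An edge (i-orbit) is isolated if neither of its arcs lies in the image of
`s`; `NoIsolated` says the graph has no isolated edges. -/
def NoIsolated (G : JKGraph) : Prop :=
  ∀ a : G.A, a ∈ Set.range G.s ∨ G.i a ∈ Set.range G.s

/-- A reduced cover: an etale morphism which is surjective on arcs (hence on
edges) and bijective on vertices. -/
def IsReducedCover {R X : JKGraph} (e : Etale R X) : Prop :=
  Function.Bijective e.fV ∧ Function.Surjective e.fA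

/-- The JK graph associated to a BM graph `(V, F, ∂, j)`: half-edges are the
flags, arcs are `F + T` (`T` the set of tails), `s` the inclusion, `p = ∂`,
and the involution is `j` on non-fixed flags while interchanging each tail
with its copy in `T`. -/
def toJK (τ : BMGraph) : JKGraph where
  A := τ.F ⊕ {f : τ.F // τ.j f = f}
  H := τ.F
  V := τ.V
  fintA := inferInstance
  fintH := τ.fintF
  fintV := τ.fintV
  decA := inferInstance
  decH := τ.decF
  s := Sum.inl
  p := τ.bd
  i := fun a =>
    match a with
    | Sum.inl f => if h : τ.j f = f then Sum.inr ⟨f, h⟩ else Sum.inl (τ.j f)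
    | Sum.inr t => Sum.inl t.val
  s_inj := fun _ _ h => Sum.inl_injective h
  i_invol := by
    rintro (f | t)
    · by_cases hf : τ.j f = f
      · simp [hf]
      · simp only [dif_neg hf]
        have : ¬ τ.j (τ.j f) = τ.j f := by
          rw [τ.j_invol]; intro h; exact hf h.symm
        simp only [dif_neg this, τ.j_invol]
        exact dif_neg fun h => hf h.symm
    · simp [t.prop]
  i_nofix := by
    rintro (f | t) h
    · by_cases hf : τ.j f = f
      · simp [hf] at h
      · simp only [dif_neg hf] at h
        exact hf (Sum.inl_injective h)
    · simp at h

open scoped Classical in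
/-- The BM graph associated to a JK graph: flags are the half-edges,
`∂ = p`, and `j` sends a flag `f` to the flag `f'` with `s f' = i (s f)` when
such a flag exists (i.e. when `f` is part of an inner edge), and fixes `f`
otherwise. -/
noncomputable def fromJK (G : JKGraph) : BMGraph where
  V := G.V
  F := G.H
  fintV := G.fintV
  fintF := G.fintH
  decF := G.decH
  bd := G.p
  j := fun f => if h : ∃ f', G.s f' = G.i (G.s f) then h.choose else f
  j_invol := by
    intro f
    by_cases h : ∃ f', G.s f' = G.i (G.s f)
    · simp only [dif_pos h]
      have hs : G.s h.choose = G.i (G.s f) := h.choose_spec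
      have h2 : ∃ f', G.s f' = G.i (G.s h.choose) := ⟨f, by rw [hs, G.i_invol]⟩
      rw [dif_pos h2]
      apply G.s_inj
      rw [h2.choose_spec, hs, G.i_invol]
    · simp only [dif_neg h]

/-- Existence of an isomorphism of BM graphs. -/
def ExistsBMIso (τ σ : BMGraph) : Prop :=
  ∃ (eV : τ.V ≃ σ.V) (eF : τ.F ≃ σ.F),
    (∀ f, eV (τ.bd f) = σ.bd (eF f)) ∧ (∀ f, eF (τ.j f) = σ.j (eF f))

/-- Existence of an isomorphism of JK graphs (an etale morphism bijective on
arcs, half-edges and vertices). -/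
def ExistsJKIso (G G' : JKGraph) : Prop :=
  ∃ e : Etale G G', Function.Bijective e.fA ∧ Function.Bijective e.fH ∧
    Function.Bijective e.fV

section Aux

open Classical

lemma fromJK_j_pos (G : JKGraph) (f : G.H) (h : ∃ f', G.s f' = G.i (G.s f)) :
    G.s ((fromJK G).j f) = G.i (G.s f) := by
  simp only [fromJK, dif_pos h]
  exact h.choose_spec

lemma fromJK_j_neg (G : JKGraph) (f : G.H) (h : ¬ ∃ f', G.s f' = G.i (G.s f)) :
    (fromJK G).j f = f := by
  simp only [fromJK, dif_neg h]

lemma fromJK_j_ne (G : JKGraph) (f : G.H) (h : ∃ f', G.s f' = G.i (G.s f)) :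
    (fromJK G).j f ≠ f := by
  intro hf
  have := fromJK_j_pos G f h
  rw [hf] at this
  exact G.i_nofix (G.s f) this.symm

lemma fromJK_fix_iff (G : JKGraph) (f : G.H) :
    (fromJK G).j f = f ↔ ¬ ∃ f', G.s f' = G.i (G.s f) := by
  constructor
  · intro hf h; exact fromJK_j_ne G f h hf
  · exact fromJK_j_neg G f

end Aux

/-- The constructions `toJK` (from BM graphs to JK graphs)
and `fromJK` (from JK graphs without isolated edges to BM graphs) are mutually
inverse up to canonical isomorphism. -/
theorem toJK_fromJK_inverse :
    (∀ τ : BMGraph, ExistsBMIso (fromJK (toJK τ)) τ) ∧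
    (∀ G : JKGraph, NoIsolated G → ExistsJKIso (toJK (fromJK G)) G) := by
  constructor
  · intro τ
    refine ⟨Equiv.refl _, Equiv.refl _, fun f => rfl, fun f => ?_⟩
    show (fromJK (toJK τ)).j f = τ.j f
    by_cases hf : τ.j f = f
    · refine (fromJK_j_neg (toJK τ) f ?_).trans hf.symm
      rintro ⟨f', hf'⟩
      simp only [toJK, dif_pos hf] at hf'
      exact absurd hf' (by simp)
    · have h : ∃ f', (toJK τ).s f' = (toJK τ).i ((toJK τ).s f) :=
        ⟨τ.j f, by simp only [toJK, dif_neg hf]⟩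
      have := fromJK_j_pos (toJK τ) f h
      simp only [toJK, dif_neg hf] at this
      exact Sum.inl_injective this
  · intro G hG
    refine ⟨⟨fun a => Sum.rec (fun f => G.s f) (fun t => G.i (G.s t.val)) a,
        id, id, fun h => rfl, fun h => rfl, ?_, ?_⟩, ?_, Function.bijective_id,
        Function.bijective_id⟩
    · rintro (f | t)
      · show Sum.rec _ _ ((toJK (fromJK G)).i (Sum.inl f)) = G.i (G.s f)
        by_cases hf : (fromJK G).j f = f
        · simp only [toJK, dif_pos hf]
        · simp only [toJK, dif_neg hf]
          have h : ∃ f', G.s f' = G.i (G.s f) := by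
            by_contra h; exact hf (fromJK_j_neg G f h)
          exact fromJK_j_pos G f h
      · show G.s t.val = G.i (G.i (G.s t.val))
        rw [G.i_invol]
    · intro h' v hv
      exact ⟨h', ⟨hv, rfl⟩, fun y hy => hy.2⟩
    · constructor
      · rintro (f | t) (f' | t') hft
        · exact congrArg Sum.inl (G.s_inj hft)
        · exfalso
          have h : ∃ f'', G.s f'' = G.i (G.s t'.val) := ⟨f, hft⟩
          exact fromJK_j_ne G t'.val h t'.prop
        · exfalso
          have h : ∃ f'', G.s f'' = G.i (G.s t.val) := ⟨f', hft.symm⟩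
          exact fromJK_j_ne G t.val h t.prop
        · have : G.s t.val = G.s t'.val := by
            have := congrArg G.i hft
            rwa [G.i_invol, G.i_invol] at this
          exact congrArg Sum.inr (Subtype.ext (G.s_inj this))
      · intro a
        by_cases hr : a ∈ Set.range G.s
        · obtain ⟨f, hf⟩ := hr
          exact ⟨Sum.inl f, hf⟩
        · obtain ⟨f, hf⟩ := (hG a).resolve_left hr
          have ha : a = G.i (G.s f) := by rw [hf, G.i_invol]
          have htail : (fromJK G).j f = f := by
            rw [fromJK_fix_iff]
            rintro ⟨f'', hf''⟩
            rw [← ha] at hf''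
            exact hr ⟨f'', hf''⟩
          exact ⟨Sum.inr ⟨f, htail⟩, ha.symm⟩
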